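/- Let α₁ > 0, α₂ > 0, R > 0, Δ > 0, and set a = (α₁+α₂)/(2R), d = a + Δ, c' = α₂Δ/(2R), χ = d² − 4c' (which is nonnegative), and A = (a(d−√χ)/2 − α₂Δ/(2R))/(−√χ) when χ > 0. Then for all t ≥ 0, ∫₀^t ds / (α₁/(s+Δ) + α₂/s + 2R) = (1/(2R)) [ t + (A − a)·log(1 + 2t/(d+√χ)) − A·log(1 + 2t/(d−√χ)) ], where the integrand is extended by the value 0 at s = 0. -/

import Mathlib

open Real

private lemma stmt11_aux (a d A R c' r s : ℝ) (hR : 0 < R)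
    (hrpos : 0 < r) (hr4 : r^2 = d^2 - 4*c') (hdr1 : 0 < d - r) (hdr2 : 0 < d + r)
    (hs0 : 0 ≤ s) (hAval : A = (a*(d - r)/2 - c')/(-r)) :
    (1/(2*R)) * (1 - (a*s + c')/(s^2 + d*s + c')) =
      1/(2*R) * (1 + (A - a) * (2/(d+r) / (1 + 2*s/(d + r))) - A * (2/(d-r) / (1 + 2*s/(d - r)))) := by
  have h1 : d + r + 2*s ≠ 0 := by positivity
  have h2 : d - r + 2*s ≠ 0 := by positivity
  have hfac : s^2 + d*s + c' = (s + (d+r)/2) * (s + (d-r)/2) := by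
    linear_combination (1/4 : ℝ) * hr4
  rw [hAval, hfac]
  have hf1 : s + (d+r)/2 ≠ 0 := by positivity
  have hf2 : s + (d-r)/2 ≠ 0 := by positivity
  field_simp
  ring

/-- Lemma 6.4 (explicit integral): for `Δ > 0` and `t ≥ 0`,
`∫₀ᵗ ds / (α₁/(s+Δ) + α₂/s + 2R)
  = (1/(2R)) [t + (A-a) log(1 + 2t/(d+√χ)) - A log(1 + 2t/(d-√χ))]`,
with `a = (α₁+α₂)/(2R)`, `d = a+Δ`, `χ = d² - 2α₂Δ/R`,
`A = (a(d-√χ)/2 - α₂Δ/(2R)) / (-√χ)`, and the integrand extended by `0` at `s = 0`. -/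
theorem stmt11 (α₁ α₂ R Δ : ℝ) (hα₁ : 0 < α₁) (hα₂ : 0 < α₂) (hR : 0 < R) (hΔ : 0 < Δ) :
    let a := (α₁ + α₂)/(2*R)
    let d := a + Δ
    let χ := d^2 - 2*α₂*Δ/R
    let A := (a*(d - Real.sqrt χ)/2 - α₂*Δ/(2*R))/(-Real.sqrt χ)
    ∀ t ≥ 0, (∫ s in (0:ℝ)..t,
        (if s = 0 then 0 else 1/(α₁/(s+Δ) + α₂/s + 2*R))) =
      (1/(2*R)) * (t + (A - a) * Real.log (1 + 2*t/(d + Real.sqrt χ))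
        - A * Real.log (1 + 2*t/(d - Real.sqrt χ))) := by
  intro a d χ A t ht
  have haval : a = (α₁ + α₂)/(2*R) := rfl
  have hdval : d = a + Δ := rfl
  have hχval : χ = d^2 - 2*α₂*Δ/R := rfl
  set r := Real.sqrt χ with hrdef
  have hAval : A = (a*(d - r)/2 - α₂*Δ/(2*R))/(-r) := rfl
  set c' := α₂*Δ/(2*R) with hc'def
  have hapos : 0 < a := by rw [haval]; positivity
  have hdpos : 0 < d := by rw [hdval]; positivity
  have hc'pos : 0 < c' := by rw [hc'def]; positivity
  have hχ4 : χ = d^2 - 4*c' := by rw [hχval, hc'def]; field_simp; ring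
  have hχpos : 0 < χ := by
    have key : χ = ((α₁+α₂+2*R*Δ)^2 - 8*R*α₂*Δ)/(2*R)^2 := by
      rw [hχval, hdval, haval]; field_simp; ring
    rw [key]
    apply div_pos _ (by positivity)
    nlinarith [sq_nonneg (α₂ - 2*R*Δ), sq_nonneg α₁, mul_pos hα₁ hα₂,
      mul_pos (mul_pos hR hΔ) hα₁]
  have hrpos : 0 < r := Real.sqrt_pos.mpr hχpos
  have hr2 : r^2 = χ := Real.sq_sqrt hχpos.le
  have hr4 : r^2 = d^2 - 4*c' := hr2.trans hχ4
  have hrd : r < d := by nlinarith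
  have hdr1 : 0 < d - r := by linarith
  have hdr2 : 0 < d + r := by linarith
  set g : ℝ → ℝ := fun s => (1/(2*R)) * (1 - (a*s + c')/(s^2 + d*s + c')) with hg
  have hQpos : ∀ s : ℝ, 0 ≤ s → 0 < s^2 + d*s + c' := by
    intro s hs; positivity
  have heq : Set.EqOn (fun s => (if s = 0 then 0 else 1/(α₁/(s+Δ) + α₂/s + 2*R))) g
      (Set.uIcc 0 t) := by
    intro s hs
    rw [Set.uIcc_of_le ht] at hs
    obtain ⟨hs0, hst⟩ := hs
    rcases eq_or_lt_of_le hs0 with h0 | h0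
    · simp only [← h0, if_pos rfl, hg]
      simp [hc'pos.ne']
    · simp only [if_neg h0.ne', hg]
      have hQ : s^2 + d*s + c' ≠ 0 := (hQpos s hs0).ne'
      have hsΔ : s + Δ ≠ 0 := by positivity
      have hden : α₁/(s+Δ) + α₂/s + 2*R ≠ 0 := by positivity
      rw [hc'def, hdval, haval] at hQ ⊢
      field_simp
      ring
  rw [intervalIntegral.integral_congr heq]
  set F : ℝ → ℝ := fun s => (1/(2*R)) * (s + (A - a) * Real.log (1 + 2*s/(d + r))
      - A * Real.log (1 + 2*s/(d - r))) with hF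
  have hderiv : ∀ s ∈ Set.uIcc (0:ℝ) t, HasDerivAt F (g s) s := by
    intro s hs
    rw [Set.uIcc_of_le ht] at hs
    obtain ⟨hs0, hst⟩ := hs
    have h1pos : 0 < 1 + 2*s/(d + r) := by positivity
    have h2pos : 0 < 1 + 2*s/(d - r) := by positivity
    have h1 : HasDerivAt (fun s : ℝ => 1 + 2*s/(d + r)) (2/(d+r)) s := by
      simpa using ((hasDerivAt_id s).const_mul 2 |>.div_const (d+r)).const_add 1
    have h2 : HasDerivAt (fun s : ℝ => 1 + 2*s/(d - r)) (2/(d-r)) s := by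
      simpa using ((hasDerivAt_id s).const_mul 2 |>.div_const (d-r)).const_add 1
    have hl1 := (h1.log h1pos.ne')
    have hl2 := (h2.log h2pos.ne')
    have hcomb := (((hasDerivAt_id s).add (hl1.const_mul (A - a))).sub
      (hl2.const_mul A)).const_mul (1/(2*R))
    have hkey := stmt11_aux a d A R c' r s hR hrpos hr4 hdr1 hdr2 hs0
      (by rw [hAval, hc'def])
    simp only [hg]
    rw [hkey]
    exact hcomb
  have hint : IntervalIntegrable g MeasureTheory.volume 0 t := by
    apply ContinuousOn.intervalIntegrable
    apply ContinuousOn.mul continuousOn_const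
    apply ContinuousOn.sub continuousOn_const
    apply ContinuousOn.div (by fun_prop) (by fun_prop)
    intro s hs
    rw [Set.uIcc_of_le ht] at hs
    exact (hQpos s hs.1).ne'
  rw [intervalIntegral.integral_eq_sub_of_hasDerivAt hderiv hint]
  simp only [hF]
  norm_num
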